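/- Let (x_m)_{m≥1} be a real sequence with x₁ = 1 and write B(n,k) := B_{n,k}(x₁, x₂, x₃, ...). For natural numbers r, s and n ≥ k ≥ 1, one has B_{n,k}(B(s,s), ..., (ms/(r(m-1)+s)) · B((r+1)(m-1)+s, r(m-1)+s) / C((r+1)(m-1)+s, r(m-1)+s), ...) = C(n,k) · (sk/(r(n-k)+sk)) · B((r+1)(n-k)+sk, r(n-k)+sk) / C((r+1)(n-k)+sk, r(n-k)+sk), where the m-th argument of the outer Bell polynomial is (ms/(r(m-1)+s)) · B((r+1)(m-1)+s, r(m-1)+s) / C((r+1)(m-1)+s, r(m-1)+s); assume r + s ≥ 1 so all denominators are positive. -/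

import Mathlib

open Finset PowerSeries

noncomputable section LagrangeAux

/-- Drop the constant coefficient and divide by `X`. -/
def pshift (P : PowerSeries ℝ) : PowerSeries ℝ := PowerSeries.mk fun i => coeff (i + 1) P

lemma coeff_pshift (P : PowerSeries ℝ) (i : ℕ) :
    coeff i (pshift P) = coeff (i + 1) P := coeff_mk _ _

lemma pshift_decomp (P : PowerSeries ℝ) :
    P = C (constantCoeff P) + X * pshift P := by
  ext j
  cases j with
  | zero => simp [coeff_zero_eq_constantCoeff]
  | succ i => simp [coeff_succ_X_mul, coeff_pshift, coeff_C]

lemma pshift_add (P Q : PowerSeries ℝ) : pshift (P + Q) = pshift P + pshift Q := by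
  ext i; simp [coeff_pshift]

lemma pshift_C (c : ℝ) : pshift (C c) = 0 := by
  ext i; simp [coeff_pshift, coeff_C]

lemma pshift_C_mul (c : ℝ) (P : PowerSeries ℝ) :
    pshift (C c * P) = C c * pshift P := by
  ext i; simp [coeff_pshift, coeff_C_mul]

lemma pshift_X_mul (W : PowerSeries ℝ) : pshift (X * W) = W := by
  ext i; simp [coeff_pshift, coeff_succ_X_mul]

lemma pshift_zero : pshift (0 : PowerSeries ℝ) = 0 := by
  ext i; simp [coeff_pshift]

variable (φ η : PowerSeries ℝ)

/-- One step of the `V = X * η`-adic expansion. -/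
def pstep (P : PowerSeries ℝ) : PowerSeries ℝ := pshift P * φ

/-- `pcoef φ m P` is the `m`-th coefficient of the expansion of `P` in powers of
`V = X * φ⁻¹`. -/
def pcoef : ℕ → PowerSeries ℝ → ℝ
  | 0, P => constantCoeff P
  | m + 1, P => pcoef m (pstep φ P)

lemma pcoef_zero (P : PowerSeries ℝ) : pcoef φ 0 P = constantCoeff P := rfl

lemma pcoef_succ (m : ℕ) (P : PowerSeries ℝ) :
    pcoef φ (m + 1) P = pcoef φ m (pstep φ P) := rfl

lemma pstep_add (P Q : PowerSeries ℝ) : pstep φ (P + Q) = pstep φ P + pstep φ Q := by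
  rw [pstep, pshift_add, add_mul]; rfl

lemma pstep_C (c : ℝ) : pstep φ (C c) = 0 := by
  rw [pstep, pshift_C, zero_mul]

lemma pstep_C_mul (c : ℝ) (P : PowerSeries ℝ) :
    pstep φ (C c * P) = C c * pstep φ P := by
  rw [pstep, pshift_C_mul, mul_assoc]; rfl

lemma pstep_zero : pstep φ (0 : PowerSeries ℝ) = 0 := by
  rw [pstep, pshift_zero, zero_mul]

lemma pcoef_add (m : ℕ) (P Q : PowerSeries ℝ) :
    pcoef φ m (P + Q) = pcoef φ m P + pcoef φ m Q := by
  induction m generalizing P Q with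
  | zero => simp [pcoef_zero]
  | succ m ih => rw [pcoef_succ, pcoef_succ, pcoef_succ, pstep_add, ih]

lemma pcoef_C_mul (m : ℕ) (c : ℝ) (P : PowerSeries ℝ) :
    pcoef φ m (C c * P) = c * pcoef φ m P := by
  induction m generalizing P with
  | zero => simp [pcoef_zero]
  | succ m ih => rw [pcoef_succ, pcoef_succ, pstep_C_mul, ih]

lemma pcoef_zero_series (m : ℕ) : pcoef φ m (0 : PowerSeries ℝ) = 0 := by
  induction m with
  | zero => simp [pcoef_zero]
  | succ m ih => rw [pcoef_succ, pstep_zero, ih]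

lemma pcoef_C (m : ℕ) (c : ℝ) :
    pcoef φ m (C c) = if m = 0 then c else 0 := by
  cases m with
  | zero => simp [pcoef_zero]
  | succ m => simp [pcoef_succ, pstep_C, pcoef_zero_series]

variable {φ η} (hη : φ * η = 1)
include hη

lemma pstep_Xeta_mul (W : PowerSeries ℝ) : pstep φ ((X * η) * W) = W := by
  have h1 : (X * η) * W = X * (η * W) := by ring
  rw [pstep, h1, pshift_X_mul]
  calc η * W * φ = W * (φ * η) := by ring
  _ = W := by rw [hη, mul_one]

lemma pdecomp (P : PowerSeries ℝ) :
    P = C (constantCoeff P) + (X * η) * pstep φ P := by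
  have h1 : (X * η) * pstep φ P = X * pshift P * (φ * η) := by rw [pstep]; ring
  rw [h1, hη, mul_one, ← pshift_decomp]

lemma pcoef_succ_decomp (N : ℕ) (c : ℝ) (W : PowerSeries ℝ) :
    pcoef φ (N + 1) (C c + (X * η) * W) = pcoef φ N W := by
  rw [pcoef_succ, pstep_add, pstep_C, pstep_Xeta_mul hη, zero_add]

lemma pcoef_Xeta_mul (m : ℕ) (W : PowerSeries ℝ) :
    pcoef φ m ((X * η) * W) = if m = 0 then 0 else pcoef φ (m - 1) W := by
  cases m with
  | zero =>
    have h1 : (X * η) * W = X * (η * W) := by ring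
    simp [pcoef_zero, h1]
  | succ m => simp [pcoef_succ, pstep_Xeta_mul hη]

/-- The key multiplicativity of `V`-adic coefficients. -/
lemma pcoef_mul (N : ℕ) : ∀ P Q : PowerSeries ℝ,
    pcoef φ N (P * Q) = ∑ j ∈ range (N + 1), pcoef φ j P * pcoef φ (N - j) Q := by
  induction N using Nat.strong_induction_on with
  | _ N ih =>
    intro P Q
    cases N with
    | zero => simp [pcoef_zero]
    | succ N =>
      set c := constantCoeff P with hc
      set d := constantCoeff Q with hd
      set P1 := pstep φ P with hP1
      set Q1 := pstep φ Q with hQ1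
      have hdP : P = C c + (X * η) * P1 := pdecomp hη P
      have hdQ : Q = C d + (X * η) * Q1 := pdecomp hη Q
      have hPQ : P * Q =
          C (c * d) + (X * η) * (C c * Q1 + C d * P1 + (X * η) * (P1 * Q1)) := by
        rw [map_mul]
        calc P * Q = (C c + (X * η) * P1) * (C d + (X * η) * Q1) := by
              rw [← hdP, ← hdQ]
        _ = _ := by ring
      rw [hPQ, pcoef_succ_decomp hη, pcoef_add, pcoef_add, pcoef_C_mul, pcoef_C_mul]
      have hassoc : (X * η) * (P1 * Q1) = ((X * η) * P1) * Q1 := by ring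
      rw [hassoc, ih N (Nat.lt_succ_self N) ((X * η) * P1) Q1]
      -- rewrite the last sum
      have hsum1 : ∑ j ∈ range (N + 1), pcoef φ j ((X * η) * P1) * pcoef φ (N - j) Q1
          = ∑ i ∈ range N, pcoef φ i P1 * pcoef φ (N - (i + 1)) Q1 := by
        rw [Finset.sum_range_succ']
        simp [pcoef_Xeta_mul hη]
      rw [hsum1]
      -- now the right-hand side
      have hRHS : ∑ j ∈ range (N + 1 + 1), pcoef φ j P * pcoef φ (N + 1 - j) Q
          = (∑ i ∈ range (N + 1), pcoef φ i P1 * pcoef φ (N - i) Q)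
            + c * pcoef φ N Q1 := by
        rw [Finset.sum_range_succ']
        congr 1
        · refine Finset.sum_congr rfl fun i _ => ?_
          simp only [Nat.succ_sub_succ]
          rfl
      rw [hRHS, Finset.sum_range_succ]
      have hlast : pcoef φ N P1 * pcoef φ (N - N) Q = pcoef φ N P1 * d := by
        rw [Nat.sub_self, pcoef_zero, ← hd]
      rw [hlast]
      have hmid : ∀ i ∈ range N, pcoef φ i P1 * pcoef φ (N - i) Q
          = pcoef φ i P1 * pcoef φ (N - (i + 1)) Q1 := by
        intro i hi
        have hi' : i < N := Finset.mem_range.mp hi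
        have h2 : N - i = (N - (i + 1)) + 1 := by omega
        rw [h2, pcoef_succ, ← hQ1]
      rw [Finset.sum_congr rfl hmid]
      ring

/-- `V`-adic coefficients of a power compute the coefficients of the Lagrange series. -/
lemma coeff_mk_pcoef_pow (P : PowerSeries ℝ) (k N : ℕ) :
    coeff N ((PowerSeries.mk fun j => pcoef φ j P) ^ k) = pcoef φ N (P ^ k) := by
  induction k generalizing N with
  | zero =>
    rw [pow_zero, pow_zero, coeff_one]
    have : (1 : PowerSeries ℝ) = C 1 := by rw [map_one]
    rw [this, pcoef_C]
  | succ k ih =>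
    rw [pow_succ, pow_succ, coeff_mul, Finset.Nat.sum_antidiagonal_eq_sum_range_succ_mk,
      pcoef_mul hη]
    refine Finset.sum_congr rfl fun j hj => ?_
    rw [ih, coeff_mk]

/-- The Lagrange kernel `A = 1 - X φ' φ⁻¹`. -/
def Aser (φ η : PowerSeries ℝ) : PowerSeries ℝ := 1 - X * (d⁄dX ℝ φ) * η

lemma coeff_pow_Aser (i : ℕ) :
    coeff (i + 1) (φ ^ (i + 1) * Aser φ η) = 0 := by
  have hpow : φ ^ (i + 1) * η = φ ^ i := by
    rw [pow_succ, mul_assoc, hη, mul_one]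
  have h1 : φ ^ (i + 1) * Aser φ η = φ ^ (i + 1) - X * ((d⁄dX ℝ φ) * φ ^ i) := by
    rw [Aser, mul_sub, mul_one, ← hpow]; ring
  rw [h1, map_sub, coeff_succ_X_mul]
  have hD : d⁄dX ℝ (φ ^ (i + 1)) = (i + 1) • (φ ^ i • d⁄dX ℝ φ) := by
    simpa using Derivation.leibniz_pow (d⁄dX ℝ) φ (i + 1)
  have h2 : coeff i (d⁄dX ℝ (φ ^ (i + 1))) = coeff (i + 1) (φ ^ (i + 1)) * (i + 1) :=
    coeff_derivative _ _
  rw [hD] at h2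
  have h3 : coeff i ((i + 1) • (φ ^ i • d⁄dX ℝ φ)) =
      ((i : ℝ) + 1) * coeff i (φ ^ i * d⁄dX ℝ φ) := by
    rw [map_nsmul, smul_eq_mul, nsmul_eq_mul]
    push_cast
    ring
  rw [h3] at h2
  have hne : ((i : ℝ) + 1) ≠ 0 := by positivity
  have h4 : coeff i (φ ^ i * d⁄dX ℝ φ) = coeff (i + 1) (φ ^ (i + 1)) := by
    apply mul_left_cancel₀ hne
    linarith [h2]
  have h5 : (d⁄dX ℝ φ) * φ ^ i = φ ^ i * d⁄dX ℝ φ := by ring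
  rw [h5, h4]
  ring

/-- Lagrange inversion in coefficient form: the `V`-adic coefficients of `P` are the
ordinary coefficients of `P φ^j A`. -/
lemma pcoef_eq (j : ℕ) : ∀ P : PowerSeries ℝ,
    pcoef φ j P = coeff j (P * φ ^ j * Aser φ η) := by
  induction j with
  | zero =>
    intro P
    rw [pow_zero, mul_one, pcoef_zero, coeff_zero_eq_constantCoeff_apply, map_mul]
    have : constantCoeff (Aser φ η) = 1 := by
      rw [Aser, map_sub, map_one, map_mul, map_mul, constantCoeff_X]
      ring
    rw [this, mul_one]
  | succ j ih =>
    intro P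
    set c := constantCoeff P with hc
    set R := pstep φ P with hR
    have hdP : P = C c + (X * η) * R := pdecomp hη P
    rw [pcoef_succ, ← hR]
    calc pcoef φ j (pstep φ P) = pcoef φ j R := by rw [← hR]
    _ = coeff j (R * φ ^ j * Aser φ η) := ih R
    _ = coeff (j + 1) (P * φ ^ (j + 1) * Aser φ η) := by
        rw [hdP]
        have hsplit : (C c + (X * η) * R) * φ ^ (j + 1) * Aser φ η
            = C c * (φ ^ (j + 1) * Aser φ η)
              + X * (R * φ ^ j * Aser φ η) * (φ * η) := by
          rw [pow_succ]; ring
        rw [hsplit, hη, mul_one, map_add, coeff_C_mul, coeff_pow_Aser hη,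
          coeff_succ_X_mul]
        ring


omit hη

lemma logderiv_pow (F : PowerSeries ℝ) (hF : F * F⁻¹ = 1) (r : ℕ) :
    (d⁄dX ℝ (F ^ r)) * (F⁻¹) ^ r = (C (r : ℝ)) * ((d⁄dX ℝ F) * F⁻¹) := by
  induction r with
  | zero => simp
  | succ r ih =>
    have hpows : F ^ r * (F⁻¹) ^ r = 1 := by rw [← mul_pow, hF, one_pow]
    have h1 : d⁄dX ℝ (F ^ (r + 1)) = F ^ r * d⁄dX ℝ F + F * d⁄dX ℝ (F ^ r) := by
      rw [pow_succ, Derivation.leibniz, smul_eq_mul, smul_eq_mul]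
    have h2 : (d⁄dX ℝ (F ^ (r + 1))) * (F⁻¹) ^ (r + 1)
        = (d⁄dX ℝ F * F⁻¹) * (F ^ r * (F⁻¹) ^ r)
          + (F * F⁻¹) * ((d⁄dX ℝ (F ^ r)) * (F⁻¹) ^ r) := by
      rw [h1, pow_succ]; ring
    rw [h2, hpows, hF, ih, mul_one, one_mul]
    push_cast [map_add, map_one]
    ring

lemma coeff_F_kernel (F : PowerSeries ℝ) (hF : F * F⁻¹ = 1) (r N a : ℕ) (ha : 1 ≤ a) :
    coeff N (F ^ a * (F ^ r) ^ N * Aser (F ^ r) ((F⁻¹) ^ r))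
      = (a : ℝ) / ((r * N + a : ℕ) : ℝ) * coeff N (F ^ (r * N + a)) := by
  obtain ⟨M', hM'⟩ : ∃ M', r * N + a = M' + 1 := ⟨r * N + a - 1, by omega⟩
  have hpow : F ^ a * (F ^ r) ^ N = F ^ (r * N + a) := by
    rw [← pow_mul, ← pow_add, add_comm]
  have hAser : F ^ (r * N + a) * Aser (F ^ r) ((F⁻¹) ^ r)
      = F ^ (r * N + a) - C (r : ℝ) * (X * (d⁄dX ℝ F * F ^ M')) := by
    rw [Aser, mul_sub, mul_one]
    congr 1
    have h1 : F ^ (r * N + a) * (X * d⁄dX ℝ (F ^ r) * (F⁻¹) ^ r)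
        = X * ((d⁄dX ℝ (F ^ r) * (F⁻¹) ^ r) * F ^ (r * N + a)) := by ring
    rw [h1, logderiv_pow F hF r, hM']
    have h2 : X * (C (r : ℝ) * (d⁄dX ℝ F * F⁻¹) * F ^ (M' + 1))
        = C (r : ℝ) * (X * (d⁄dX ℝ F * F ^ M' * (F * F⁻¹))) := by
      rw [pow_succ]; ring
    rw [h2, hF, mul_one]
  rw [mul_assoc, ← mul_assoc, hpow, hAser, map_sub, coeff_C_mul]
  have hane : ((r * N + a : ℕ) : ℝ) ≠ 0 := by
    have : 0 < r * N + a := by omega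
    exact_mod_cast this.ne'
  cases N with
  | zero =>
    have hX : coeff 0 (X * (d⁄dX ℝ F * F ^ M')) = 0 := by
      rw [coeff_zero_eq_constantCoeff_apply, map_mul, constantCoeff_X, zero_mul]
    rw [hX]
    have hr0 : (r : ℝ) * 0 = 0 := mul_zero _
    rw [hr0, sub_zero]
    have ha0 : r * 0 + a = a := by omega
    rw [ha0] at hane ⊢
    field_simp
  | succ N' =>
    rw [coeff_succ_X_mul]
    have hD : d⁄dX ℝ (F ^ (M' + 1)) = (M' + 1) • (F ^ M' • d⁄dX ℝ F) := by
      simpa using Derivation.leibniz_pow (d⁄dX ℝ) F (M' + 1)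
    have h2 : coeff N' (d⁄dX ℝ (F ^ (M' + 1)))
        = coeff (N' + 1) (F ^ (M' + 1)) * (N' + 1) := coeff_derivative _ _
    rw [hD] at h2
    have h3 : coeff N' ((M' + 1) • (F ^ M' • d⁄dX ℝ F))
        = ((M' : ℝ) + 1) * coeff N' (F ^ M' * d⁄dX ℝ F) := by
      rw [map_nsmul, smul_eq_mul, nsmul_eq_mul]
      push_cast
      ring
    rw [h3] at h2
    have hcomm : d⁄dX ℝ F * F ^ M' = F ^ M' * d⁄dX ℝ F := by ring
    rw [hcomm]
    set Qv := coeff (N' + 1) (F ^ (M' + 1)) with hQv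
    -- rewrite target exponent
    rw [hM'] at hane ⊢
    have hM'ne : ((M' : ℝ) + 1) ≠ 0 := by positivity
    have hMcast : (r : ℝ) * ((N' : ℝ) + 1) + (a : ℝ) = (M' : ℝ) + 1 := by
      exact_mod_cast hM'
    have h4 : coeff N' (F ^ M' * d⁄dX ℝ F) = Qv * ((N' : ℝ) + 1) / ((M' : ℝ) + 1) := by
      field_simp
      linarith [h2]
    rw [h4]
    have hcast2 : ((M' + 1 : ℕ) : ℝ) = (M' : ℝ) + 1 := by push_cast; ring
    rw [hcast2] at hane ⊢
    have expand : Qv - (r : ℝ) * (Qv * ((N' : ℝ) + 1) / ((M' : ℝ) + 1))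
        = (Qv * (((M' : ℝ) + 1) - (r : ℝ) * ((N' : ℝ) + 1))) / ((M' : ℝ) + 1) := by
      field_simp
    have hsub : ((M' : ℝ) + 1) - (r : ℝ) * ((N' : ℝ) + 1) = (a : ℝ) := by
      linarith [hMcast]
    rw [expand, hsub]
    ring

end LagrangeAux

/-- The exponential partial Bell polynomial `B_{n,k}(x₁,x₂,…)`, defined via the
generating function `∑_{n} B_{n,k} tⁿ/n! = (1/k!) (∑_{m≥1} x_m t^m/m!)^k`. -/
noncomputable def bellB (n k : ℕ) (x : ℕ → ℝ) : ℝ :=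
  ((Nat.factorial n : ℝ) / (Nat.factorial k : ℝ)) *
    PowerSeries.coeff n
      ((PowerSeries.mk fun m => if m = 0 then 0 else x m / (Nat.factorial m : ℝ)) ^ k)

/-- The complete Bell polynomial `A_n(x₁,…,x_n) = ∑_{k=1}^n B_{n,k}`, `A₀ = 1`. -/
noncomputable def bellA (n : ℕ) (x : ℕ → ℝ) : ℝ :=
  if n = 0 then 1 else ∑ k ∈ Finset.Icc 1 n, bellB n k x

lemma bellB_eq_core (y : ℕ → ℝ) (G : PowerSeries ℝ)
    (hG : (PowerSeries.mk fun m => if m = 0 then 0 else y m / (Nat.factorial m : ℝ)) = X * G)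
    (n k : ℕ) (hkn : k ≤ n) :
    bellB n k y = (n.choose k : ℝ) * ((n - k).factorial : ℝ) * coeff (n - k) (G ^ k) := by
  rw [bellB, hG, mul_pow]
  have h1 : coeff n (X ^ k * G ^ k) = coeff (n - k) (G ^ k) := by
    have h := coeff_X_pow_mul (G ^ k) k (n - k)
    rwa [Nat.sub_add_cancel hkn] at h
  rw [h1]
  have h2 := Nat.choose_mul_factorial_mul_factorial hkn
  have h3 : (n.factorial : ℝ)
      = (n.choose k : ℝ) * ((n - k).factorial : ℝ) * (k.factorial : ℝ) := by
    exact_mod_cast (by rw [← h2]; ring : n.factorial = n.choose k * (n - k).factorial * k.factorial)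
  have hk0 : (Nat.factorial k : ℝ) ≠ 0 := Nat.cast_ne_zero.mpr (Nat.factorial_ne_zero k)
  rw [h3]
  field_simp
theorem stmt_11 (x : ℕ → ℝ) (hx1 : x 1 = 1) (r s : ℕ) (hrs : 1 ≤ r + s)
    (n k : ℕ) (hk : 1 ≤ k) (hkn : k ≤ n) :
    bellB n k
        (fun m => ((m * s : ℕ) : ℝ) / ((r * (m - 1) + s : ℕ) : ℝ) *
          bellB ((r + 1) * (m - 1) + s) (r * (m - 1) + s) x /
            ((((r + 1) * (m - 1) + s).choose (r * (m - 1) + s) : ℕ) : ℝ)) =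
      (n.choose k : ℝ) * ((s * k : ℕ) : ℝ) / ((r * (n - k) + s * k : ℕ) : ℝ) *
        bellB ((r + 1) * (n - k) + s * k) (r * (n - k) + s * k) x /
          ((((r + 1) * (n - k) + s * k).choose (r * (n - k) + s * k) : ℕ) : ℝ) := by
  by_cases hs : s = 0
  · subst hs
    have hfun : (fun m : ℕ => ((m * 0 : ℕ) : ℝ) / ((r * (m - 1) + 0 : ℕ) : ℝ) *
          bellB ((r + 1) * (m - 1) + 0) (r * (m - 1) + 0) x /
            ((((r + 1) * (m - 1) + 0).choose (r * (m - 1) + 0) : ℕ) : ℝ))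
        = fun _ : ℕ => (0 : ℝ) := by
      funext m; simp
    rw [hfun]
    have hser : (PowerSeries.mk fun m => if m = 0 then (0 : ℝ)
        else (fun _ : ℕ => (0 : ℝ)) m / (Nat.factorial m : ℝ)) = 0 := by
      ext m; simp
    rw [bellB, hser, zero_pow (by omega : k ≠ 0), map_zero, mul_zero]
    simp
  · have hs1 : 1 ≤ s := Nat.one_le_iff_ne_zero.mpr hs
    set F : PowerSeries ℝ := PowerSeries.mk fun i => x (i + 1) / (Nat.factorial (i + 1) : ℝ)
      with hFdef
    have hFc : constantCoeff F = 1 := by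
      rw [hFdef, ← coeff_zero_eq_constantCoeff_apply, coeff_mk]
      simp [hx1]
    have hF : F * F⁻¹ = 1 := PowerSeries.mul_inv_cancel F (by rw [hFc]; exact one_ne_zero)
    have hη : (F ^ r) * ((F⁻¹) ^ r) = 1 := by rw [← mul_pow, hF, one_pow]
    have hxF : (PowerSeries.mk fun m => if m = 0 then 0 else x m / (Nat.factorial m : ℝ))
        = X * F := by
      ext m
      cases m with
      | zero => simp
      | succ i => rw [coeff_succ_X_mul, hFdef, coeff_mk, coeff_mk]; simp
    have hbellx : ∀ n' k' : ℕ, k' ≤ n' → bellB n' k' x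
        = (n'.choose k' : ℝ) * ((n' - k').factorial : ℝ) * coeff (n' - k') (F ^ k') :=
      fun n' k' h => bellB_eq_core x F hxF n' k' h
    set G : PowerSeries ℝ := PowerSeries.mk fun j => pcoef (F ^ r) j (F ^ s) with hGdef
    have hyG : (PowerSeries.mk fun m => if m = 0 then 0 else
        (((m * s : ℕ) : ℝ) / ((r * (m - 1) + s : ℕ) : ℝ) *
          bellB ((r + 1) * (m - 1) + s) (r * (m - 1) + s) x /
            ((((r + 1) * (m - 1) + s).choose (r * (m - 1) + s) : ℕ) : ℝ))
          / (Nat.factorial m : ℝ)) = X * G := by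
      ext m
      cases m with
      | zero => simp
      | succ j =>
        rw [coeff_succ_X_mul, hGdef, coeff_mk, coeff_mk]
        simp only [Nat.add_sub_cancel, Nat.succ_ne_zero, if_false]
        have hmul : (r + 1) * j + s = (r * j + s) + j := by ring
        have hle : r * j + s ≤ (r + 1) * j + s := by omega
        have hsub : (r + 1) * j + s - (r * j + s) = j := by omega
        rw [hbellx ((r + 1) * j + s) (r * j + s) hle, hsub]
        rw [pcoef_eq hη j (F ^ s), coeff_F_kernel F hF r j s hs1]
        have hC : ((((r + 1) * j + s).choose (r * j + s) : ℕ) : ℝ) ≠ 0 :=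
          Nat.cast_ne_zero.mpr (Nat.choose_pos hle).ne'
        have hden : ((r * j + s : ℕ) : ℝ) ≠ 0 := by
          have : 0 < r * j + s := by omega
          exact_mod_cast this.ne'
        have hfact : ((j + 1).factorial : ℝ) = ((j : ℝ) + 1) * (j.factorial : ℝ) := by
          rw [Nat.factorial_succ]; push_cast; ring
        have hj1 : ((j : ℝ) + 1) ≠ 0 := by positivity
        have hjf : ((j.factorial : ℕ) : ℝ) ≠ 0 := Nat.cast_ne_zero.mpr (Nat.factorial_ne_zero j)
        rw [hfact]
        push_cast
        field_simp
    have hbelly := bellB_eq_core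
      (fun m => ((m * s : ℕ) : ℝ) / ((r * (m - 1) + s : ℕ) : ℝ) *
          bellB ((r + 1) * (m - 1) + s) (r * (m - 1) + s) x /
            ((((r + 1) * (m - 1) + s).choose (r * (m - 1) + s) : ℕ) : ℝ))
      G hyG n k hkn
    rw [hbelly, hGdef, coeff_mk_pcoef_pow hη, ← pow_mul,
      pcoef_eq hη (n - k) (F ^ (s * k)), coeff_F_kernel F hF r (n - k) (s * k) (by nlinarith)]
    have hle2 : r * (n - k) + s * k ≤ (r + 1) * (n - k) + s * k := by
      have : (r + 1) * (n - k) = r * (n - k) + (n - k) := by ring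
      omega
    have hsub2 : (r + 1) * (n - k) + s * k - (r * (n - k) + s * k) = n - k := by
      have : (r + 1) * (n - k) = r * (n - k) + (n - k) := by ring
      omega
    rw [hbellx ((r + 1) * (n - k) + s * k) (r * (n - k) + s * k) hle2, hsub2]
    have hC2 : ((((r + 1) * (n - k) + s * k).choose (r * (n - k) + s * k) : ℕ) : ℝ) ≠ 0 :=
      Nat.cast_ne_zero.mpr (Nat.choose_pos hle2).ne'
    have hden2 : ((r * (n - k) + s * k : ℕ) : ℝ) ≠ 0 := by
      have : 0 < r * (n - k) + s * k := by nlinarith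
      exact_mod_cast this.ne'
    set D : ℝ := ((r * (n - k) + s * k : ℕ) : ℝ) with hD
    set Cc : ℝ := ((((r + 1) * (n - k) + s * k).choose (r * (n - k) + s * k) : ℕ) : ℝ) with hCc
    set Sk : ℝ := ((s * k : ℕ) : ℝ) with hSk
    field_simp
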